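/- There exists a locally-zero groupoid that is not a semigroup: on the three-element set X = {a, b, c}, the binary operation • given by a•a=a, a•b=a, a•c=c, b•a=b, b•b=b, b•c=b, c•a=a, c•b=c, c•c=c is locally-zero but is not associative (indeed (a•b)•c = c while a•(b•c) = a). -/
import Mathlib


/-- A groupoid is locally-zero if it is idempotent and its restriction to every pair of
distinct elements is either a left-zero-semigroup or a right-zero-semigroup. -/
def LocallyZero {X : Type*} (bullet : X → X → X) : Prop :=
  (∀ x : X, bullet x x = x) ∧
  ∀ x y : X, x ≠ y →
    (bullet x y = x ∧ bullet y x = y) ∨ (bullet x y = y ∧ bullet y x = x)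

/-- The groupoid on `{a, b, c}` (encoded as `Fin 3` with `a = 0`, `b = 1`, `c = 2`)
given by the table `a•a=a, a•b=a, a•c=c, b•a=b, b•b=b, b•c=b, c•a=a, c•b=c, c•c=c`. -/
def exOp : Fin 3 → Fin 3 → Fin 3 := fun x y =>
  match x, y with
  | 0, 0 => 0
  | 0, 1 => 0
  | 0, 2 => 2
  | 1, 0 => 1
  | 1, 1 => 1
  | 1, 2 => 1
  | 2, 0 => 0
  | 2, 1 => 2
  | 2, 2 => 2

/-- There is a locally-zero groupoid that is not a semigroup: the above table is
locally-zero but not associative, since `(a•b)•c = c` while `a•(b•c) = a`. -/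
theorem exists_locallyZero_not_semigroup :
    LocallyZero exOp ∧
    ¬ (∀ x y z : Fin 3, exOp (exOp x y) z = exOp x (exOp y z)) ∧
    exOp (exOp 0 1) 2 = 2 ∧ exOp 0 (exOp 1 2) = 0 := by
  refine ⟨⟨by decide, by decide⟩, fun h => by have := h 0 1 2; simp [exOp] at this, rfl, rfl⟩
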